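/- Let ψ_1 : H_2(G, ⊕_{i=1}^r k[G/G_i]) → H_2(G, k) be the map induced by Φ. Identifying H_2(G,k) = (R ∩ [F,F])/[F,R] ⊗_ℤ k by Hopf's theorem and H_2(G, k[G/G_i]) = H_2(G_i, k) by Shapiro's lemma, with each G_i elementary abelian (so [F_i,F_i] ⊆ R_i), the map induced by the i-th summand, f_i : [F_i,F_i]/[F_i,R_i] → (R ∩ [F,F])/[F,R], has kernel ([F_i,F_i] ∩ [F,R])/[F_i,R_i] and image isomorphic to [F_i,F_i][F,R]/[F,R]; consequently coker ψ_1 = (R ∩ [F,F])/⟨ [F_i,F_i][F,R] ⟩ ⊗_ℤ k, the subgroup generated over those i with |G_i| > p (for G_i cyclic of order p the contribution vanishes). -/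

import Mathlib

/-!
STATEMENT 14.  `G` is a finite `p`-group acting on an ordinary curve, with (elementary
abelian) decomposition groups `G_1, …, G_r` at the ramification points, over an algebraically
closed field `k` of characteristic `p`.  Fix a free presentation `1 → R → F → G → 1`
(`F` a free group, `pr : F → G`, `R = ker pr`), and for each `i` a subgroup `F_i ≤ F` with
normal subgroup `R_i` presenting `G_i = F_i/R_i`.  By Hopf's theorem
`H₂(G, k) = (R ∩ [F,F])/[F,R] ⊗_ℤ k` and, via Shapiro's lemma,
`H₂(G, k[G/G_i]) = H₂(G_i, k) = [F_i,F_i]/[F_i,R_i] ⊗_ℤ k` (note `[F_i,F_i] ⊆ R_i` since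
`G_i` is abelian); under these identifications the map
`ψ₁ : H₂(G, ⊕_i k[G/G_i]) → H₂(G, k)` induced by `Φ` is induced by the natural maps
`f_i : [F_i,F_i]/[F_i,R_i] → (R ∩ [F,F])/[F,R]`.  (All the quotients involved are abelian
groups; we pass through `Abelianization` so that tensoring with `k` over `ℤ` makes sense.)

Claim: (i) `ker f_i = ([F_i,F_i] ∩ [F,R])/[F_i,R_i]`;
(ii) `im f_i ≅ [F_i,F_i][F,R]/[F,R]`;
(iii) `coker ψ₁ = (R ∩ [F,F])/⟨[F_i,F_i][F,R]⟩ ⊗_ℤ k`, where `⟨[F_i,F_i][F,R]⟩` is the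
subgroup generated by `[F,R]` and the `[F_i,F_i]` over those `i` with `|G_i| > p`.
-/

/-- The quotient of the subgroup `N` of `F` by (the trace on `N` of) the subgroup `D`. -/
abbrev hopfQuot (F : Type*) [Group F] (N D : Subgroup F) [(D.subgroupOf N).Normal] :=
  ↥N ⧸ D.subgroupOf N


open scoped commutatorElement in
lemma hopf_aux_comm_le {F G : Type*} [Group F] [Group G] (pr : F →* G) (Fi : Subgroup F)
    (g : F) (hg : g ∈ Fi) (hgen : ∀ h ∈ Fi, ∃ n : ℤ, pr h = (pr g) ^ n) :
    ⁅Fi, Fi⁆ ≤ ⁅Fi, pr.ker ⊓ Fi⁆ := by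
  set N : Subgroup ↥Fi := (pr.ker ⊓ Fi).subgroupOf Fi with hNdef
  haveI hN : N.Normal := by
    have : N = (pr.comp Fi.subtype).ker := by
      ext x
      simp [hNdef, Subgroup.mem_subgroupOf, MonoidHom.mem_ker, x.2]
    rw [this]; infer_instance
  set C : Subgroup ↥Fi := ⁅(⊤ : Subgroup ↥Fi), N⁆ with hCdef
  haveI hCn : C.Normal := Subgroup.commutator_normal ⊤ N
  -- centrality of images of N in the quotient
  have hcentral : ∀ w : ↥Fi, w ∈ N → ∀ q : ↥Fi ⧸ C,
      Commute (QuotientGroup.mk w : ↥Fi ⧸ C) q := by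
    intro w hw q
    induction q using QuotientGroup.induction_on with
    | H h =>
      show QuotientGroup.mk w * QuotientGroup.mk h = QuotientGroup.mk h * QuotientGroup.mk w
      rw [← QuotientGroup.mk_mul, ← QuotientGroup.mk_mul, QuotientGroup.eq]
      have : (w * h)⁻¹ * (h * w) = ⁅h⁻¹, w⁻¹⁆ := by
        simp [commutatorElement_def, mul_assoc]
      rw [this]
      exact Subgroup.commutator_mem_commutator (Subgroup.mem_top _) (inv_mem hw)
  -- decomposition of arbitrary elements
  have hdecomp : ∀ x : ↥Fi, ∃ (a : ℤ) (w : ↥Fi), w ∈ N ∧ x = (⟨g, hg⟩ : ↥Fi) ^ a * w := by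
    intro x
    obtain ⟨a, ha⟩ := hgen (x : F) x.2
    refine ⟨a, (⟨g, hg⟩ : ↥Fi) ^ (-a) * x, ?_, by group⟩
    have : ((⟨g, hg⟩ : ↥Fi) ^ (-a) * x : F) = g ^ (-a) * (x : F) := by push_cast; ring_nf
    simp only [hNdef, Subgroup.mem_subgroupOf, this]
    refine ⟨?_, Fi.mul_mem (Fi.zpow_mem hg _) x.2⟩
    simp [MonoidHom.mem_ker, map_zpow, ha, ← zpow_add]
  -- all commutators lie in C
  have hmain : ∀ x y : ↥Fi, ⁅x, y⁆ ∈ C := by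
    intro x y
    have h1 : (QuotientGroup.mk ⁅x, y⁆ : ↥Fi ⧸ C) = ⁅(QuotientGroup.mk x : ↥Fi ⧸ C), QuotientGroup.mk y⁆ := rfl
    rw [← QuotientGroup.eq_one_iff, h1, commutatorElement_eq_one_iff_commute]
    obtain ⟨a, w, hw, rfl⟩ := hdecomp x
    obtain ⟨b, v, hv, rfl⟩ := hdecomp y
    set gg : ↥Fi ⧸ C := QuotientGroup.mk (⟨g, hg⟩ : ↥Fi)
    have hww := hcentral w hw
    have hvv := hcentral v hv
    have : (QuotientGroup.mk ((⟨g, hg⟩ : ↥Fi) ^ a * w) : ↥Fi ⧸ C) = gg ^ a * QuotientGroup.mk w := by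
      simp [gg]
    rw [this]
    have : (QuotientGroup.mk ((⟨g, hg⟩ : ↥Fi) ^ b * v) : ↥Fi ⧸ C) = gg ^ b * QuotientGroup.mk v := by
      simp [gg]
    rw [this]
    have c1 : Commute (gg ^ a) (gg ^ b) := (Commute.refl gg).zpow_zpow a b
    exact Commute.mul_left (Commute.mul_right c1 ((hvv (gg ^ a)).symm)) (hww _)
  -- conclude
  rw [Subgroup.commutator_le]
  intro x hx y hy
  have hmem : ⁅(⟨x, hx⟩ : ↥Fi), (⟨y, hy⟩ : ↥Fi)⁆ ∈ C := hmain _ _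
  have : ⁅x, y⁆ ∈ Subgroup.map Fi.subtype C := ⟨_, hmem, rfl⟩
  have hmap : Subgroup.map Fi.subtype C = ⁅Fi, pr.ker ⊓ Fi⁆ := by
    rw [hCdef, Subgroup.map_commutator, hNdef, Subgroup.subgroupOf_map_subtype]
    congr 1
    · rw [← MonoidHom.range_eq_map, Subgroup.subtype_range]
    · rw [inf_assoc, inf_idem]
  rwa [hmap] at this


lemma hopf_aux_gen {p : ℕ} [Fact p.Prime] {G : Type*} [Group G] [Finite G] (Gi : Subgroup G)
    (hpg : IsPGroup p ↥Gi) (hle : Nat.card ↥Gi ≤ p)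
    {F : Type*} [Group F] (pr : F →* G) (Fi : Subgroup F) (hFi : Fi.map pr = Gi) :
    ∃ g ∈ Fi, ∀ h ∈ Fi, ∃ n : ℤ, pr h = (pr g) ^ n := by
  haveI : IsCyclic ↥Gi := by
    obtain ⟨n, hn⟩ := hpg.exists_card_eq
    rcases Nat.eq_zero_or_pos n with rfl | hn1
    · rw [pow_zero] at hn
      haveI : Subsingleton ↥Gi := by
        rw [Nat.card_eq_one_iff_unique] at hn
        exact hn.1
      infer_instance
    · have hp2 : 1 < p := (Fact.out (p := p.Prime)).one_lt
      have hple : p ≤ p ^ n := Nat.le_self_pow hn1.ne' p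
      have hcard : Nat.card ↥Gi = p := le_antisymm hle (hn ▸ hple)
      exact isCyclic_of_prime_card hcard
  obtain ⟨gq, hgq⟩ := IsCyclic.exists_generator (α := ↥Gi)
  have hmem : (gq : G) ∈ Fi.map pr := by rw [hFi]; exact gq.2
  obtain ⟨g, hgFi, hprg⟩ := hmem
  refine ⟨g, hgFi, fun h hh => ?_⟩
  have hph : pr h ∈ Gi := by rw [← hFi]; exact ⟨h, hh, rfl⟩
  obtain ⟨n, hn⟩ := Subgroup.mem_zpowers_iff.mp (hgq ⟨pr h, hph⟩)
  refine ⟨n, ?_⟩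
  rw [hprg]
  have := congrArg (Subtype.val) hn
  push_cast at this
  exact this.symm

open scoped commutatorElement in
open scoped TensorProduct in
lemma hopf_coker_general (k : Type*) [Field k] {F : Type*} [Group F]
    (RC D SD : Subgroup F) (hDSD : D ≤ SD) (hRCcomm : ⁅RC, RC⁆ ≤ D)
    [inst1 : (D.subgroupOf RC).Normal] [inst2 : (SD.subgroupOf RC).Normal]
    {V : Type*} [AddCommGroup V] [Module k V]
    (ψ : V →ₗ[k] k ⊗[ℤ] Additive (Abelianization (hopfQuot F RC D)))
    (hgen : LinearMap.range ψ = Submodule.span k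
      {t | ∃ (z : F) (hz : z ∈ SD) (hz' : z ∈ RC),
        t = (1 : k) ⊗ₜ[ℤ] Additive.ofMul (Abelianization.of
          (QuotientGroup.mk (⟨z, hz'⟩ : ↥RC) : hopfQuot F RC D))}) :
    Nonempty (((k ⊗[ℤ] Additive (Abelianization (hopfQuot F RC D))) ⧸ LinearMap.range ψ) ≃ₗ[k]
      k ⊗[ℤ] Additive (Abelianization (hopfQuot F RC SD))) := by
  -- the projection at the level of quotient groups
  have hle : D.subgroupOf RC ≤ (SD.subgroupOf RC).comap (MonoidHom.id ↥RC) := by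
    rw [Subgroup.comap_id]
    exact fun x hx => hDSD hx
  set πgrp : hopfQuot F RC D →* hopfQuot F RC SD :=
    QuotientGroup.map (D.subgroupOf RC) (SD.subgroupOf RC) (MonoidHom.id ↥RC) hle with hπgrp
  have hπmk : ∀ x : ↥RC, πgrp (QuotientGroup.mk x) = QuotientGroup.mk x := fun x => rfl
  have hπsurj : Function.Surjective πgrp := by
    intro q
    induction q using QuotientGroup.induction_on with
    | H x => exact ⟨QuotientGroup.mk x, rfl⟩
  -- the target quotient is commutative, so its abelianization map is injective
  have hofinj : ∀ y : hopfQuot F RC SD, Abelianization.of y = 1 → y = 1 := by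
    intro y hy
    have hbot : commutator (hopfQuot F RC SD) = ⊥ := by
      rw [commutator_def, eq_bot_iff]
      rw [Subgroup.commutator_le]
      intro g1 _ g2 _
      rw [Subgroup.mem_bot, commutatorElement_eq_one_iff_commute]
      induction g1 using QuotientGroup.induction_on with
      | H a =>
        induction g2 using QuotientGroup.induction_on with
        | H b =>
          show QuotientGroup.mk a * QuotientGroup.mk b = QuotientGroup.mk b * QuotientGroup.mk a
          rw [← QuotientGroup.mk_mul, ← QuotientGroup.mk_mul, QuotientGroup.eq]
          have heq : (a * b)⁻¹ * (b * a) = ⁅b⁻¹, a⁻¹⁆ := by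
            simp [commutatorElement_def, mul_assoc]
          rw [heq, Subgroup.mem_subgroupOf]
          have : ((⁅b⁻¹, a⁻¹⁆ : ↥RC) : F) = ⁅((b⁻¹ : ↥RC) : F), ((a⁻¹ : ↥RC) : F)⁆ := rfl
          rw [this]
          exact hDSD (hRCcomm (Subgroup.commutator_mem_commutator (b⁻¹).2 (a⁻¹).2))
    have hmem := (QuotientGroup.eq_one_iff y).mp hy
    rw [hbot] at hmem
    exact Subgroup.mem_bot.mp hmem
  -- the induced map of ℤ-modules
  set tπ : (Additive (Abelianization (hopfQuot F RC D))) →ₗ[ℤ]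
      (Additive (Abelianization (hopfQuot F RC SD))) :=
    (MonoidHom.toAdditive (Abelianization.map πgrp)).toIntLinearMap with htπ
  have htπ_apply : ∀ a : Abelianization (hopfQuot F RC D),
      tπ (Additive.ofMul a) = Additive.ofMul (Abelianization.map πgrp a) := fun a => rfl
  -- surjectivity of `tπ`
  have hofsurj1 : Function.Surjective (Abelianization.of (G := hopfQuot F RC D)) :=
    fun b => Quotient.inductionOn' b (fun c => ⟨c, rfl⟩)
  have hofsurj2 : Function.Surjective (Abelianization.of (G := hopfQuot F RC SD)) :=
    fun b => Quotient.inductionOn' b (fun c => ⟨c, rfl⟩)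
  have htπsurj : Function.Surjective tπ := by
    intro m
    obtain ⟨a, rfl⟩ : ∃ a, Additive.ofMul a = m := ⟨Additive.toMul m, rfl⟩
    obtain ⟨q, rfl⟩ := hofsurj2 a
    obtain ⟨q', rfl⟩ := hπsurj q
    exact ⟨Additive.ofMul (Abelianization.of q'), by rw [htπ_apply, Abelianization.map_of]⟩
  -- base change to `k`
  set PI := LinearMap.baseChange k tπ with hPI
  have hPI_eq : ∀ t, PI t = LinearMap.lTensor k tπ t := by
    intro t; rw [hPI, LinearMap.baseChange_eq_ltensor]
  have hPIsurj : Function.Surjective PI := by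
    intro t
    obtain ⟨u, hu⟩ := LinearMap.lTensor_surjective k htπsurj t
    exact ⟨u, by rw [hPI_eq, hu]⟩
  -- kernel of `PI` is the span of the generators
  have hrange_eq : LinearMap.range ψ = LinearMap.ker PI := by
    rw [hgen]
    apply le_antisymm
    · rw [Submodule.span_le]
      rintro t ⟨z, hz, hz', rfl⟩
      rw [SetLike.mem_coe, LinearMap.mem_ker, hPI, LinearMap.baseChange_tmul]
      have h1 : (QuotientGroup.mk (⟨z, hz'⟩ : ↥RC) : hopfQuot F RC SD) = 1 :=
        (QuotientGroup.eq_one_iff _).mpr (Subgroup.mem_subgroupOf.mpr hz)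
      rw [htπ_apply, Abelianization.map_of, hπmk, h1]
      simp
    · intro t ht
      rw [LinearMap.mem_ker, hPI_eq] at ht
      have hexact := lTensor_exact (R := ℤ) k (LinearMap.exact_subtype_ker_map tπ) htπsurj
      obtain ⟨u, rfl⟩ := (hexact t).mp ht
      clear ht
      induction u using TensorProduct.induction_on with
      | zero => simp
      | add u v hu hv => rw [map_add]; exact Submodule.add_mem _ hu hv
      | tmul c m =>
        rw [LinearMap.lTensor_tmul]
        obtain ⟨m, hm⟩ := m
        have hm0 : tπ m = 0 := hm
        have hsm : c ⊗ₜ[ℤ] ((Submodule.subtype _) ⟨m, hm⟩) = c • ((1 : k) ⊗ₜ[ℤ] m) := by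
          rw [TensorProduct.smul_tmul']
          simp
        rw [hsm]
        refine Submodule.smul_mem _ c (Submodule.subset_span ?_)
        -- identify `m` as a generator
        obtain ⟨a, rfl⟩ : ∃ a, Additive.ofMul a = m := ⟨Additive.toMul m, rfl⟩
        obtain ⟨q, rfl⟩ := hofsurj1 a
        induction q using QuotientGroup.induction_on with
        | H x =>
          rw [htπ_apply, Abelianization.map_of, hπmk] at hm0
          have h2 : Abelianization.of (QuotientGroup.mk x : hopfQuot F RC SD) = 1 := by
            have := congrArg Additive.toMul hm0
            simpa using this
          have h3 := hofinj _ h2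
          have h4 : x ∈ SD.subgroupOf RC := (QuotientGroup.eq_one_iff _).mp h3
          exact ⟨(x : F), Subgroup.mem_subgroupOf.mp h4, x.2, rfl⟩
  exact ⟨(Submodule.quotEquivOfEq _ _ hrange_eq).trans
    (LinearMap.quotKerEquivOfSurjective PI hPIsurj)⟩


open scoped DirectSum TensorProduct in
theorem hopf_cokernel_of_psi1
    (k : Type*) [Field k] (p : ℕ) [Fact p.Prime] [CharP k p]
    (G : Type*) [Group G] [Fintype G] (hGp : IsPGroup p G)
    (r : ℕ) (Gi : Fin r → Subgroup G)
    -- the decomposition groups are elementary abelian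
    (helem : ∀ (i : Fin r) (x : ↥(Gi i)), x ^ p = 1)
    (hcomm : ∀ (i : Fin r) (x y : ↥(Gi i)), x * y = y * x)
    -- a free presentation `1 → R → F → G → 1`
    (F : Type*) [Group F] [IsFreeGroup F]
    (pr : F →* G) (hpr : Function.Surjective pr)
    -- subgroups `F_i`, `R_i` with `G_i = F_i / R_i`
    (Fi Ri : Fin r → Subgroup F)
    (hRiFi : ∀ i, Ri i ≤ Fi i)
    (hFi : ∀ i, (Fi i).map pr = Gi i)
    (hRi : ∀ i, Ri i = pr.ker ⊓ Fi i)
    -- `[F_i,F_i] ⊆ R ∩ [F,F]` (as `G_i` is abelian)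
    (hsub : ∀ i, ⁅Fi i, Fi i⁆ ≤ pr.ker ⊓ ⁅(⊤ : Subgroup F), (⊤ : Subgroup F)⁆)
    -- normality of the subgroups we quotient by
    [∀ i, ((⁅Fi i, Ri i⁆).subgroupOf ⁅Fi i, Fi i⁆).Normal]
    [((⁅(⊤ : Subgroup F), pr.ker⁆).subgroupOf
        (pr.ker ⊓ ⁅(⊤ : Subgroup F), (⊤ : Subgroup F)⁆)).Normal]
    [∀ i, ((⁅(⊤ : Subgroup F), pr.ker⁆).subgroupOf
        (⁅Fi i, Fi i⁆ ⊔ ⁅(⊤ : Subgroup F), pr.ker⁆)).Normal]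
    [(((⨆ (i : Fin r) (_ : p < Nat.card ↥(Gi i)), ⁅Fi i, Fi i⁆) ⊔
        ⁅(⊤ : Subgroup F), pr.ker⁆).subgroupOf
        (pr.ker ⊓ ⁅(⊤ : Subgroup F), (⊤ : Subgroup F)⁆)).Normal]
    -- the maps `f_i : [F_i,F_i]/[F_i,R_i] → (R ∩ [F,F])/[F,R]`
    (fmap : ∀ i : Fin r, hopfQuot F ⁅Fi i, Fi i⁆ ⁅Fi i, Ri i⁆ →*
      hopfQuot F (pr.ker ⊓ ⁅(⊤ : Subgroup F), (⊤ : Subgroup F)⁆) ⁅(⊤ : Subgroup F), pr.ker⁆)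
    (hfmap : ∀ (i : Fin r) (x : ↥(⁅Fi i, Fi i⁆ : Subgroup F)),
      fmap i (QuotientGroup.mk x) = QuotientGroup.mk (⟨(x : F), hsub i x.2⟩ :
        ↥(pr.ker ⊓ ⁅(⊤ : Subgroup F), (⊤ : Subgroup F)⁆)))
    -- `ψ₁ : H₂(G, ⊕_i k[G/G_i]) → H₂(G, k)`, under the Hopf/Shapiro identifications
    (ψ1 : (⨁ i : Fin r,
        k ⊗[ℤ] Additive (Abelianization (hopfQuot F ⁅Fi i, Fi i⁆ ⁅Fi i, Ri i⁆))) →ₗ[k]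
      k ⊗[ℤ] Additive (Abelianization (hopfQuot F
        (pr.ker ⊓ ⁅(⊤ : Subgroup F), (⊤ : Subgroup F)⁆) ⁅(⊤ : Subgroup F), pr.ker⁆)))
    (hψ1 : ∀ (i : Fin r) (x : ↥(⁅Fi i, Fi i⁆ : Subgroup F)),
      ψ1 (DirectSum.lof k (Fin r)
          (fun i => k ⊗[ℤ] Additive (Abelianization (hopfQuot F ⁅Fi i, Fi i⁆ ⁅Fi i, Ri i⁆))) i
          ((1 : k) ⊗ₜ[ℤ] Additive.ofMul (Abelianization.of (QuotientGroup.mk x)))) =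
        (1 : k) ⊗ₜ[ℤ] Additive.ofMul (Abelianization.of (fmap i (QuotientGroup.mk x)))) :
    -- (i) the kernel of `f_i` is `([F_i,F_i] ∩ [F,R])/[F_i,R_i]`
    (∀ i : Fin r, (fmap i).ker =
      (((⁅Fi i, Fi i⁆ ⊓ ⁅(⊤ : Subgroup F), pr.ker⁆).subgroupOf ⁅Fi i, Fi i⁆).map
        (QuotientGroup.mk' ((⁅Fi i, Ri i⁆).subgroupOf ⁅Fi i, Fi i⁆)))) ∧
    -- (ii) the image of `f_i` is `[F_i,F_i][F,R]/[F,R]`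
    (∀ i : Fin r, Nonempty ((fmap i).range ≃*
      hopfQuot F (⁅Fi i, Fi i⁆ ⊔ ⁅(⊤ : Subgroup F), pr.ker⁆) ⁅(⊤ : Subgroup F), pr.ker⁆)) ∧
    -- (iii) `coker ψ₁ = (R ∩ [F,F])/⟨[F_i,F_i][F,R]⟩ ⊗_ℤ k`
    Nonempty (((k ⊗[ℤ] Additive (Abelianization (hopfQuot F
          (pr.ker ⊓ ⁅(⊤ : Subgroup F), (⊤ : Subgroup F)⁆) ⁅(⊤ : Subgroup F), pr.ker⁆))) ⧸
        LinearMap.range ψ1) ≃ₗ[k]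
      k ⊗[ℤ] Additive (Abelianization (hopfQuot F
        (pr.ker ⊓ ⁅(⊤ : Subgroup F), (⊤ : Subgroup F)⁆)
        ((⨆ (i : Fin r) (_ : p < Nat.card ↥(Gi i)), ⁅Fi i, Fi i⁆) ⊔
          ⁅(⊤ : Subgroup F), pr.ker⁆)))) := by
  have hBD : ∀ i, ⁅Fi i, Ri i⁆ ≤ ⁅(⊤ : Subgroup F), pr.ker⁆ :=
    fun i => Subgroup.commutator_mono le_top (by rw [hRi i]; exact inf_le_left)
  refine ⟨?_, ?_, ?_⟩
  · -- (i)
    intro i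
    ext q
    induction q using QuotientGroup.induction_on with
    | H x =>
      rw [MonoidHom.mem_ker, hfmap i x, QuotientGroup.eq_one_iff, Subgroup.mem_subgroupOf]
      constructor
      · intro hxD
        exact ⟨x, Subgroup.mem_subgroupOf.mpr ⟨x.2, hxD⟩, rfl⟩
      · rintro ⟨y, hy, hyx⟩
        have hy' : (y : F) ∈ ⁅Fi i, Fi i⁆ ⊓ ⁅(⊤ : Subgroup F), pr.ker⁆ := hy
        show (x : F) ∈ ⁅(⊤ : Subgroup F), pr.ker⁆
        rw [QuotientGroup.mk'_apply, QuotientGroup.eq] at hyx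
        have h2 : ((y⁻¹ * x : ↥(⁅Fi i, Fi i⁆ : Subgroup F)) : F) ∈ ⁅Fi i, Ri i⁆ :=
          Subgroup.mem_subgroupOf.mp hyx
        have h3 : (x : F) = (y : F) * ((y⁻¹ * x : ↥(⁅Fi i, Fi i⁆ : Subgroup F)) : F) := by
          push_cast; group
        rw [h3]
        exact Subgroup.mul_mem _ hy'.2 (hBD i h2)
  · -- (ii)
    intro i
    set fcomp : ↥(⁅Fi i, Fi i⁆ : Subgroup F) →* hopfQuot F
        (pr.ker ⊓ ⁅(⊤ : Subgroup F), (⊤ : Subgroup F)⁆) ⁅(⊤ : Subgroup F), pr.ker⁆ :=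
      (fmap i).comp (QuotientGroup.mk' ((⁅Fi i, Ri i⁆).subgroupOf ⁅Fi i, Fi i⁆)) with hfcomp
    set g : ↥(⁅Fi i, Fi i⁆ : Subgroup F) →* hopfQuot F
        (⁅Fi i, Fi i⁆ ⊔ ⁅(⊤ : Subgroup F), pr.ker⁆) ⁅(⊤ : Subgroup F), pr.ker⁆ :=
      (QuotientGroup.mk' ((⁅(⊤ : Subgroup F), pr.ker⁆).subgroupOf
        (⁅Fi i, Fi i⁆ ⊔ ⁅(⊤ : Subgroup F), pr.ker⁆))).comp
        (Subgroup.inclusion le_sup_left) with hgdef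
    have hfc : ∀ x : ↥(⁅Fi i, Fi i⁆ : Subgroup F),
        fcomp x = QuotientGroup.mk (⟨(x : F), hsub i x.2⟩ :
          ↥(pr.ker ⊓ ⁅(⊤ : Subgroup F), (⊤ : Subgroup F)⁆)) := by
      intro x
      rw [hfcomp, MonoidHom.comp_apply, QuotientGroup.mk'_apply, hfmap]
    have hker : fcomp.ker = g.ker := by
      ext x
      rw [MonoidHom.mem_ker, MonoidHom.mem_ker, hfc, QuotientGroup.eq_one_iff,
        Subgroup.mem_subgroupOf, hgdef, MonoidHom.comp_apply, QuotientGroup.mk'_apply,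
        QuotientGroup.eq_one_iff, Subgroup.mem_subgroupOf, Subgroup.coe_inclusion]
    have hsurj : Function.Surjective g := by
      intro q
      induction q using QuotientGroup.induction_on with
      | H z =>
        haveI : (⁅(⊤ : Subgroup F), pr.ker⁆).Normal := Subgroup.commutator_normal ⊤ pr.ker
        have hz : ∃ a ∈ (⁅Fi i, Fi i⁆ : Subgroup F), ∃ d ∈ ⁅(⊤ : Subgroup F), pr.ker⁆,
            a * d = (z : F) := by
          have h5 := Subgroup.mul_normal (⁅Fi i, Fi i⁆ : Subgroup F) ⁅(⊤ : Subgroup F), pr.ker⁆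
          have h6 : (z : F) ∈ (⁅Fi i, Fi i⁆ ⊔ ⁅(⊤ : Subgroup F), pr.ker⁆ : Subgroup F) := z.2
          rw [← SetLike.mem_coe, h5] at h6
          exact Set.mem_mul.mp h6
        obtain ⟨a, ha, d, hd, hadz⟩ := hz
        refine ⟨⟨a, ha⟩, ?_⟩
        rw [hgdef, MonoidHom.comp_apply, QuotientGroup.mk'_apply, QuotientGroup.eq,
          Subgroup.mem_subgroupOf]
        have h4 : (((Subgroup.inclusion (le_sup_left :
            (⁅Fi i, Fi i⁆ : Subgroup F) ≤ ⁅Fi i, Fi i⁆ ⊔ ⁅(⊤ : Subgroup F), pr.ker⁆)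
            ⟨a, ha⟩)⁻¹ * z : ↥(⁅Fi i, Fi i⁆ ⊔ ⁅(⊤ : Subgroup F), pr.ker⁆)) : F) = d := by
          push_cast [Subgroup.coe_inclusion]
          rw [← hadz]; group
        rw [h4]; exact hd
    have hrange : fcomp.range = (fmap i).range := by
      ext t
      constructor
      · rintro ⟨x, rfl⟩
        exact ⟨QuotientGroup.mk x, by rw [hfcomp, MonoidHom.comp_apply, QuotientGroup.mk'_apply]⟩
      · rintro ⟨q, rfl⟩
        induction q using QuotientGroup.induction_on with
        | H x =>
          exact ⟨x, by rw [hfcomp, MonoidHom.comp_apply, QuotientGroup.mk'_apply]⟩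
    exact ⟨(MulEquiv.subgroupCongr hrange.symm).trans
      ((QuotientGroup.quotientKerEquivRange fcomp).symm.trans
        ((QuotientGroup.quotientMulEquivOfEq hker).trans
          (QuotientGroup.quotientKerEquivOfSurjective g hsurj)))⟩
  · -- (iii)
    have hsmallD : ∀ i, ¬ p < Nat.card ↥(Gi i) →
        ⁅Fi i, Fi i⁆ ≤ ⁅(⊤ : Subgroup F), pr.ker⁆ := by
      intro i hi
      have hpg : IsPGroup p ↥(Gi i) := fun x => ⟨1, by rw [pow_one]; exact helem i x⟩
      obtain ⟨g, hg, hgen⟩ := hopf_aux_gen (Gi i) hpg (not_lt.mp hi) pr (Fi i) (hFi i)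
      refine (hopf_aux_comm_le pr (Fi i) g hg hgen).trans ?_
      rw [← hRi i]
      exact hBD i
    have hzSD : ∀ (i : Fin r), ⁅Fi i, Fi i⁆ ≤
        (⨆ (j : Fin r) (_ : p < Nat.card ↥(Gi j)), ⁅Fi j, Fi j⁆) ⊔ ⁅(⊤ : Subgroup F), pr.ker⁆ := by
      intro i
      by_cases hbig : p < Nat.card ↥(Gi i)
      · exact le_sup_of_le_left (le_iSup_of_le i (le_iSup_of_le hbig le_rfl))
      · exact le_sup_of_le_right (hsmallD i hbig)
    have hgen : LinearMap.range ψ1 = Submodule.span k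
        {t | ∃ (z : F) (_ : z ∈ (⨆ (i : Fin r) (_ : p < Nat.card ↥(Gi i)), ⁅Fi i, Fi i⁆) ⊔
              ⁅(⊤ : Subgroup F), pr.ker⁆)
            (hz' : z ∈ pr.ker ⊓ ⁅(⊤ : Subgroup F), (⊤ : Subgroup F)⁆),
          t = (1 : k) ⊗ₜ[ℤ] Additive.ofMul (Abelianization.of
            (QuotientGroup.mk (⟨z, hz'⟩ : ↥(pr.ker ⊓ ⁅(⊤ : Subgroup F), (⊤ : Subgroup F)⁆)) :
              hopfQuot F (pr.ker ⊓ ⁅(⊤ : Subgroup F), (⊤ : Subgroup F)⁆)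
                ⁅(⊤ : Subgroup F), pr.ker⁆))} := by
      apply le_antisymm
      · -- range ψ1 is contained in the span of the generators
        rintro t ⟨u, rfl⟩
        induction u using DirectSum.induction_on with
        | zero => rw [map_zero]; exact Submodule.zero_mem _
        | add u v hu hv => rw [map_add]; exact Submodule.add_mem _ hu hv
        | of i t' =>
          induction t' using TensorProduct.induction_on with
          | zero => rw [map_zero, map_zero]; exact Submodule.zero_mem _
          | add a b ha hb => rw [map_add, map_add]; exact Submodule.add_mem _ ha hb
          | tmul c m =>
            obtain ⟨a, rfl⟩ : ∃ a, Additive.ofMul a = m := ⟨Additive.toMul m, rfl⟩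
            obtain ⟨q, rfl⟩ : ∃ q, Abelianization.of q = a :=
              Quotient.inductionOn' a (fun c => ⟨c, rfl⟩)
            induction q using QuotientGroup.induction_on with
            | H x =>
              have hsmul : (DirectSum.of _ i) (c ⊗ₜ[ℤ] Additive.ofMul (Abelianization.of
                  (QuotientGroup.mk x))) = c • (DirectSum.lof k (Fin r)
                  (fun j => k ⊗[ℤ] Additive (Abelianization
                    (hopfQuot F ⁅Fi j, Fi j⁆ ⁅Fi j, Ri j⁆))) i)
                  ((1 : k) ⊗ₜ[ℤ] Additive.ofMul (Abelianization.of (QuotientGroup.mk x))) := by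
                rw [← map_smul, TensorProduct.smul_tmul', smul_eq_mul, mul_one,
                  DirectSum.lof_eq_of]
              rw [hsmul, map_smul, hψ1 i x, hfmap i x]
              exact Submodule.smul_mem _ c (Submodule.subset_span
                ⟨(x : F), hzSD i x.2, hsub i x.2, rfl⟩)
      · -- the generators lie in the range of ψ1
        rw [Submodule.span_le]
        rintro t ⟨z, hz, hz', rfl⟩
        rw [SetLike.mem_coe]
        set θ : ↥(pr.ker ⊓ ⁅(⊤ : Subgroup F), (⊤ : Subgroup F)⁆) →*
            Multiplicative (k ⊗[ℤ] Additive (Abelianization (hopfQuot F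
              (pr.ker ⊓ ⁅(⊤ : Subgroup F), (⊤ : Subgroup F)⁆) ⁅(⊤ : Subgroup F), pr.ker⁆))) :=
          { toFun := fun x => Multiplicative.ofAdd ((1 : k) ⊗ₜ[ℤ]
              Additive.ofMul (Abelianization.of (QuotientGroup.mk x)))
            map_one' := by
              simp only [QuotientGroup.mk_one, map_one, ofMul_one, TensorProduct.tmul_zero,
                ofAdd_zero]
            map_mul' := by
              intro x y
              simp only [QuotientGroup.mk_mul, map_mul, ofMul_mul, TensorProduct.tmul_add,
                ofAdd_add] } with hθ
        set V : Subgroup (Multiplicative (k ⊗[ℤ] Additive (Abelianization (hopfQuot F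
              (pr.ker ⊓ ⁅(⊤ : Subgroup F), (⊤ : Subgroup F)⁆) ⁅(⊤ : Subgroup F), pr.ker⁆)))) :=
          AddSubgroup.toSubgroup ((LinearMap.range ψ1).toAddSubgroup) with hV
        have hθV : ∀ x : ↥(pr.ker ⊓ ⁅(⊤ : Subgroup F), (⊤ : Subgroup F)⁆),
            x ∈ Subgroup.comap θ V ↔ ((1 : k) ⊗ₜ[ℤ] Additive.ofMul (Abelianization.of
              (QuotientGroup.mk x : hopfQuot F (pr.ker ⊓ ⁅(⊤ : Subgroup F), (⊤ : Subgroup F)⁆)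
                ⁅(⊤ : Subgroup F), pr.ker⁆)) ∈ LinearMap.range ψ1) := fun x => Iff.rfl
        have hsupW : (⨆ (i : Fin r) (_ : p < Nat.card ↥(Gi i)), ⁅Fi i, Fi i⁆) ⊔
            ⁅(⊤ : Subgroup F), pr.ker⁆ ≤ Subgroup.map
              (pr.ker ⊓ ⁅(⊤ : Subgroup F), (⊤ : Subgroup F)⁆).subtype (Subgroup.comap θ V) := by
          refine sup_le (iSup_le fun i => iSup_le fun _ => ?_) ?_
          · intro x hx
            refine ⟨⟨x, hsub i hx⟩, ?_, rfl⟩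
            refine (hθV _).mpr ⟨(DirectSum.lof k (Fin r)
              (fun j => k ⊗[ℤ] Additive (Abelianization
                (hopfQuot F ⁅Fi j, Fi j⁆ ⁅Fi j, Ri j⁆))) i)
              ((1 : k) ⊗ₜ[ℤ] Additive.ofMul (Abelianization.of
                (QuotientGroup.mk (⟨x, hx⟩ : ↥(⁅Fi i, Fi i⁆ : Subgroup F))))), ?_⟩
            rw [hψ1 i, hfmap i]
          · intro w hw
            have hwRC : w ∈ pr.ker ⊓ ⁅(⊤ : Subgroup F), (⊤ : Subgroup F)⁆ :=
              le_inf (Subgroup.commutator_le_right _ _)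
                (Subgroup.commutator_mono le_rfl le_top) hw
            refine ⟨⟨w, hwRC⟩, ?_, rfl⟩
            have h1 : (QuotientGroup.mk (⟨w, hwRC⟩ :
                ↥(pr.ker ⊓ ⁅(⊤ : Subgroup F), (⊤ : Subgroup F)⁆)) : hopfQuot F
                (pr.ker ⊓ ⁅(⊤ : Subgroup F), (⊤ : Subgroup F)⁆) ⁅(⊤ : Subgroup F), pr.ker⁆) = 1 :=
              (QuotientGroup.eq_one_iff _).mpr (Subgroup.mem_subgroupOf.mpr hw)
            refine (hθV _).mpr ?_
            rw [h1, map_one, ofMul_one, TensorProduct.tmul_zero]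
            exact Submodule.zero_mem _
        obtain ⟨w, hw, hwz⟩ := hsupW hz
        have hweq : w = ⟨z, hz'⟩ := Subtype.ext hwz
        rw [hweq] at hw
        exact (hθV _).mp hw
    have h2 := hopf_coker_general (V := ⨁ i : Fin r,
        k ⊗[ℤ] Additive (Abelianization (hopfQuot F ⁅Fi i, Fi i⁆ ⁅Fi i, Ri i⁆)))
      k (pr.ker ⊓ ⁅(⊤ : Subgroup F), (⊤ : Subgroup F)⁆)
      ⁅(⊤ : Subgroup F), pr.ker⁆
      ((⨆ (i : Fin r) (_ : p < Nat.card ↥(Gi i)), ⁅Fi i, Fi i⁆) ⊔ ⁅(⊤ : Subgroup F), pr.ker⁆)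
      le_sup_right (Subgroup.commutator_mono le_top inf_le_left) ψ1 hgen
    exact h2
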